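/- Let T be a triangulated category, N a triangulated subcategory of T, and (U, X, V) an N-localization triple of T. If U ∩ V is a Frobenius special X-monic closed subcategory of T, then (U, X, V) satisfies the Verdier condition: for every distinguished triangle A →(s) B → N → A[1] with A, B ∈ U ∩ V and N ∈ N, there exists a morphism t: B → A such that 1_A − t∘s and 1_B − s∘t both factor through X. -/

import Mathlib

open CategoryTheory Category Limits Pretriangulated

universe v u

variable {T : Type u} [Category.{v} T] [HasZeroObject T] [HasShift T ℤ]
  [Preadditive T] [∀ n : ℤ, (CategoryTheory.shiftFunctor T n).Additive] [Pretriangulated T]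

namespace VerdierPaper

/-- A morphism factors through the subcategory `X`. -/
def FactorsThru (X : Set T) {A B : T} (f : A ⟶ B) : Prop :=
  ∃ (X₀ : T) (_ : X₀ ∈ X) (g : A ⟶ X₀) (h : X₀ ⟶ B), f = g ≫ h

/-- A triangulated subcategory: closed under isomorphisms, shifts in both directions,
contains a zero object, and two-out-of-three for distinguished triangles. -/
structure IsTriangulatedSub (N : Set T) : Prop where
  zero : ∃ Z ∈ N, IsZero Z
  closedIso : ∀ {A B : T}, (A ≅ B) → A ∈ N → B ∈ N
  shift : ∀ A ∈ N, (A⟦(1 : ℤ)⟧) ∈ N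
  unshift : ∀ A ∈ N, (A⟦(-1 : ℤ)⟧) ∈ N
  two_of_three₁₂ : ∀ Tr ∈ (distTriang T), Tr.obj₁ ∈ N → Tr.obj₂ ∈ N → Tr.obj₃ ∈ N
  two_of_three₂₃ : ∀ Tr ∈ (distTriang T), Tr.obj₂ ∈ N → Tr.obj₃ ∈ N → Tr.obj₁ ∈ N
  two_of_three₁₃ : ∀ Tr ∈ (distTriang T), Tr.obj₁ ∈ N → Tr.obj₃ ∈ N → Tr.obj₂ ∈ N

/-- Closed under direct summands (retracts). -/
def ClosedUnderSummands (S : Set T) : Prop :=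
  ∀ (X₀ A : T), X₀ ∈ S → ∀ (i : A ⟶ X₀) (r : X₀ ⟶ A), i ≫ r = 𝟙 A → A ∈ S

/-- `f : A ⟶ B` is `X`-monic: every morphism from `A` to an object of `X` extends along `f`. -/
def XMonic (X : Set T) {A B : T} (f : A ⟶ B) : Prop :=
  ∀ X₀ ∈ X, ∀ g : A ⟶ X₀, ∃ h : B ⟶ X₀, f ≫ h = g

/-- `f : A ⟶ B` is `X`-epic: every morphism from an object of `X` to `B` lifts along `f`. -/
def XEpic (X : Set T) {A B : T} (f : A ⟶ B) : Prop :=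
  ∀ X₀ ∈ X, ∀ g : X₀ ⟶ B, ∃ h : X₀ ⟶ A, h ≫ f = g

/-- An `X`-preenvelope: an `X`-monic with target in `X`. -/
def Preenvelope (X : Set T) {A X₀ : T} (f : A ⟶ X₀) : Prop :=
  X₀ ∈ X ∧ XMonic X f

/-- An `X`-precover: an `X`-epic with source in `X`. -/
def Precover (X : Set T) {X₀ B : T} (f : X₀ ⟶ B) : Prop :=
  X₀ ∈ X ∧ XEpic X f

/-- `U^{⊥,X}`: objects such that every morphism from an object of `U` factors through `X`. -/
def perpRightX (U X : Set T) : Set T :=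
  {W | ∀ U₀ ∈ U, ∀ f : U₀ ⟶ W, FactorsThru X f}

/-- `^{X,⊥}V`: objects such that every morphism to an object of `V` factors through `X`. -/
def perpLeftX (X V : Set T) : Set T :=
  {W | ∀ V₀ ∈ V, ∀ f : W ⟶ V₀, FactorsThru X f}

/-- A localization triple `(U, X, V)` of `T`. Triangles `A[-1] → W → Q → A` are
recorded in the rotated form `W → Q → A → W[1]`. -/
structure IsLocalizationTriple (U X V : Set T) : Prop where
  subU : X ⊆ U
  subV : X ⊆ V
  precover : ∀ A : T, ∃ (W Q : T) (w : W ⟶ Q) (r : Q ⟶ A) (d : A ⟶ W⟦(1 : ℤ)⟧),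
    Triangle.mk w r d ∈ (distTriang T) ∧ Precover U r ∧ W ∈ perpRightX U X
  preenvelope : ∀ A : T, ∃ (R W : T) (j : A ⟶ R) (t : R ⟶ W) (d : W ⟶ A⟦(1 : ℤ)⟧),
    Triangle.mk j t d ∈ (distTriang T) ∧ Preenvelope V j ∧ W ∈ perpLeftX X V
  precoverV : ∀ A ∈ V, ∃ (W Q : T) (w : W ⟶ Q) (r : Q ⟶ A) (d : A ⟶ W⟦(1 : ℤ)⟧),
    Triangle.mk w r d ∈ (distTriang T) ∧ Precover U r ∧ W ∈ perpRightX U X ∧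
    Q ∈ U ∩ V ∧ W ∈ V ∧ W ∈ perpRightX (U ∩ V) X
  preenvelopeU : ∀ A ∈ U, ∃ (R W : T) (j : A ⟶ R) (t : R ⟶ W) (d : W ⟶ A⟦(1 : ℤ)⟧),
    Triangle.mk j t d ∈ (distTriang T) ∧ Preenvelope V j ∧ W ∈ perpLeftX X V ∧
    R ∈ U ∩ V ∧ W ∈ U ∧ W ∈ perpLeftX X (U ∩ V)

/-- An `N`-localization triple. -/
structure IsNLocalizationTriple (N U X V : Set T) extends IsLocalizationTriple U X V : Prop where
  xEq : X = U ∩ V ∩ N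
  perpR_subset : perpRightX U X ⊆ N
  perpL_subset : perpLeftX X V ⊆ N

/-- The Verdier condition for an `N`-localization triple. -/
def VerdierCondition (N U X V : Set T) : Prop :=
  ∀ (A B N₀ : T) (s : A ⟶ B) (g : B ⟶ N₀) (h : N₀ ⟶ A⟦(1 : ℤ)⟧),
    Triangle.mk s g h ∈ (distTriang T) → A ∈ U ∩ V → B ∈ U ∩ V → N₀ ∈ N →
    ∃ t : B ⟶ A, FactorsThru X (𝟙 A - s ≫ t) ∧ FactorsThru X (𝟙 B - t ≫ s)


/-- `Cc` is special `X`-monic closed in `T`. -/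
structure SpecialXMonicClosed (X Cc : Set T) : Prop where
  subset : X ⊆ Cc
  envelope : ∀ A ∈ Cc, ∃ (X₀ U₀ : T) (i : A ⟶ X₀) (p : X₀ ⟶ U₀) (q : U₀ ⟶ A⟦(1 : ℤ)⟧),
    Triangle.mk i p q ∈ (distTriang T) ∧ X₀ ∈ X ∧ U₀ ∈ Cc ∧ Preenvelope X i
  pushout : ∀ (A X₀ U₀ B : T) (i : A ⟶ X₀) (p : X₀ ⟶ U₀) (q : U₀ ⟶ A⟦(1 : ℤ)⟧),
    Triangle.mk i p q ∈ (distTriang T) → X₀ ∈ X → U₀ ∈ Cc → Preenvelope X i →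
    A ∈ Cc → B ∈ Cc → ∀ f : A ⟶ B,
    ∃ (N₀ : T) (g : X₀ ⊞ B ⟶ N₀) (h : N₀ ⟶ A⟦(1 : ℤ)⟧),
      Triangle.mk (biprod.lift i f) g h ∈ (distTriang T) ∧ N₀ ∈ Cc

/-- `Cc` is Frobenius special `X`-monic closed in `T`. -/
structure FrobSpecialXMonicClosed (X Cc : Set T) extends SpecialXMonicClosed X Cc : Prop where
  copresent : ∀ A ∈ Cc, ∃ (K X' : T) (u : K ⟶ X') (v : X' ⟶ A) (d : A ⟶ K⟦(1 : ℤ)⟧),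
    Triangle.mk u v d ∈ (distTriang T) ∧ X' ∈ X ∧ K ∈ Cc ∧ Preenvelope X u
  biEnvelope : ∀ A ∈ Cc, ∃ (X₀ U₀ : T) (i : A ⟶ X₀) (p : X₀ ⟶ U₀) (q : U₀ ⟶ A⟦(1 : ℤ)⟧),
    Triangle.mk i p q ∈ (distTriang T) ∧ X₀ ∈ X ∧ U₀ ∈ Cc ∧ Preenvelope X i ∧ Precover X p

/-- Binary biproducts of objects of a triangulated subcategory lie in it. -/
lemma IsTriangulatedSub.biprod_mem {N : Set T} (hN : IsTriangulatedSub N)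
    {P Q : T} (hP : P ∈ N) (hQ : Q ∈ N) : (P ⊞ Q) ∈ N :=
  hN.two_of_three₁₃ _ (binaryBiproductTriangle_distinguished P Q) hP hQ

/-- Key factorization lemma: any composite `C₁ ⟶ D ⟶ C₂` with `C₁ ∈ U`, `C₂ ∈ V` and
`D ∈ N` factors through an object of `X`. -/
lemma key_lemma {N U X V : Set T} (hN : IsTriangulatedSub N)
    (hLoc : IsNLocalizationTriple N U X V)
    {C₁ C₂ D : T} (hC₁ : C₁ ∈ U) (hC₂ : C₂ ∈ V) (hD : D ∈ N)
    (φ : C₁ ⟶ D) (ψ : D ⟶ C₂) : FactorsThru X (φ ≫ ψ) := by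
  obtain ⟨R, W₁, j, tt, d, hTj, ⟨hRV, hjmon⟩, hW₁⟩ := hLoc.preenvelope D
  have hRN : R ∈ N := hN.two_of_three₁₃ _ hTj hD (hLoc.perpL_subset hW₁)
  obtain ⟨W₂, Q, w, r, d', hTr, ⟨hQU, hrepi⟩, hW₂, hQUV, hW₂V, hW₂perp⟩ :=
    hLoc.precoverV R hRV
  have hQN : Q ∈ N := hN.two_of_three₁₃ _ hTr (hLoc.perpR_subset hW₂) hRN
  have hQX : Q ∈ X := by rw [hLoc.xEq]; exact ⟨hQUV, hQN⟩
  obtain ⟨ψ₁, hψ₁⟩ := hjmon C₂ hC₂ ψ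
  obtain ⟨ψ₂, hψ₂⟩ := hrepi C₁ hC₁ (φ ≫ j)
  refine ⟨Q, hQX, ψ₂, r ≫ ψ₁, ?_⟩
  rw [← hψ₁, ← Category.assoc, ← hψ₂, Category.assoc]

theorem statement_0 (N U X V : Set T) (hN : IsTriangulatedSub N)
    (hLoc : IsNLocalizationTriple N U X V)
    (hFrob : FrobSpecialXMonicClosed X (U ∩ V)) :
    VerdierCondition N U X V := by
  intro A B N₀ s g h hT1 hA hB hN₀
  -- zero composites in the given triangle
  have hsg : s ≫ g = 0 := comp_distTriang_mor_zero₁₂ _ hT1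
  have hgh : g ≫ h = 0 := comp_distTriang_mor_zero₂₃ _ hT1
  have hhs : h ≫ s⟦(1 : ℤ)⟧' = 0 := comp_distTriang_mor_zero₃₁ _ hT1
  -- Step 1: bi-envelope of A
  obtain ⟨X₀, U₀, i, p, q, hT2, hX₀X, hU₀, hienv, hpcov⟩ := hFrob.biEnvelope A hA
  have hX₀N : X₀ ∈ N := by
    have h2 := hX₀X; rw [hLoc.xEq] at h2; exact h2.2
  have hpq : p ≫ q = 0 := comp_distTriang_mor_zero₂₃ _ hT2
  -- Step 2: pushout of the bi-envelope triangle along s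
  obtain ⟨M, g', h', hT3, hM⟩ :=
    hFrob.pushout A X₀ U₀ B i p q hT2 hX₀X hU₀ hienv hA hB s
  have hfg' : biprod.lift i s ≫ g' = 0 := comp_distTriang_mor_zero₁₂ _ hT3
  have hg'h' : g' ≫ h' = 0 := comp_distTriang_mor_zero₂₃ _ hT3
  have hh'f : h' ≫ (biprod.lift i s)⟦(1 : ℤ)⟧' = 0 := comp_distTriang_mor_zero₃₁ _ hT3
  have hf_dec : biprod.lift i s = i ≫ biprod.inl + s ≫ biprod.inr := by
    apply biprod.hom_ext <;> simp
  have hh'i : h' ≫ i⟦(1 : ℤ)⟧' = 0 := by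
    have e : i = biprod.lift i s ≫ biprod.fst := by simp
    rw [e, Functor.map_comp, ← Category.assoc, hh'f, zero_comp]
  have e1 : i ≫ (biprod.inl ≫ g') = -(s ≫ (biprod.inr ≫ g')) := by
    have h0 : i ≫ (biprod.inl ≫ g') + s ≫ (biprod.inr ≫ g') = 0 := by
      have h3 := hfg'
      rw [hf_dec, Preadditive.add_comp, Category.assoc, Category.assoc] at h3
      exact h3
    exact eq_neg_of_add_eq_zero_left h0
  -- Step 3: the comparison map m : M ⟶ N₀
  obtain ⟨m, hm₁, hm₂⟩ := complete_distinguished_triangle_morphism _ _ hT3 hT1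
    (𝟙 A) biprod.snd (by exact (biprod.lift_snd i s).trans (id_comp s).symm)
  change M ⟶ N₀ at m
  change g' ≫ m = biprod.snd ≫ g at hm₁
  change h' ≫ (shiftFunctor T (1 : ℤ)).map (𝟙 A) = m ≫ h at hm₂
  have hmh : m ≫ h = h' := by simpa using hm₂.symm
  -- Step 4: the triangle X₀ ⟶ D ⟶ N₀ ⟶ X₀⟦1⟧ over h ≫ i⟦1⟧
  obtain ⟨D, a, b, hTD⟩ := distinguished_cocone_triangle₂ (h ≫ i⟦(1 : ℤ)⟧')
  have hDN : D ∈ N := hN.two_of_three₁₃ _ hTD hX₀N hN₀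
  have hab : a ≫ b = 0 := comp_distTriang_mor_zero₁₂ _ hTD
  -- Step 5: the map δ : B ⟶ D
  obtain ⟨δ, hδ₁, hδ₂⟩ := complete_distinguished_triangle_morphism₁ _ _
    (rot_of_distTriang _ hT1) (rot_of_distTriang _ hTD) (𝟙 N₀) (i⟦(1 : ℤ)⟧')
    (by exact (id_comp (h ≫ i⟦(1 : ℤ)⟧')).symm)
  change B ⟶ D at δ
  change g ≫ 𝟙 N₀ = δ ≫ b at hδ₁
  change (-(s⟦(1 : ℤ)⟧')) ≫ δ⟦(1 : ℤ)⟧' = i⟦(1 : ℤ)⟧' ≫ (-(a⟦(1 : ℤ)⟧')) at hδ₂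
  have hδb : δ ≫ b = g := by rw [comp_id] at hδ₁; exact hδ₁.symm
  have hsδ : s ≫ δ = i ≫ a := by
    apply (shiftFunctor T (1 : ℤ)).map_injective
    rw [Preadditive.neg_comp, Preadditive.comp_neg, neg_inj] at hδ₂
    simpa only [Functor.map_comp] using hδ₂
  -- Step 6: the map χ : M ⟶ D
  have hfζ : biprod.lift i s ≫ biprod.desc a (-δ) = 0 := by
    rw [biprod.lift_desc, Preadditive.comp_neg, hsδ, add_neg_cancel]
  obtain ⟨χ, hχ⟩ := Triangle.yoneda_exact₂ _ hT3 (biprod.desc a (-δ)) hfζ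
  change M ⟶ D at χ
  change biprod.desc a (-δ) = g' ≫ χ at hχ
  -- hχ : biprod.desc a (-δ) = g' ≫ χ
  -- Step 7: the map ρ₀ : D ⟶ M with a ≫ ρ₀ = biprod.inl ≫ g'
  have hP1 : (h ≫ i⟦(1 : ℤ)⟧') ≫ (biprod.inl ≫ g')⟦(1 : ℤ)⟧' = 0 := by
    rw [Category.assoc, ← Functor.map_comp, e1, Functor.map_neg, Preadditive.comp_neg,
      Functor.map_comp, ← Category.assoc, hhs, zero_comp, neg_zero]
  obtain ⟨ρ₀, hρ₀⟩ := Triangle.yoneda_exact₂ _ (inv_rot_of_distTriang _ hTD)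
    (biprod.inl ≫ g') (by
      change (-((h ≫ i⟦(1 : ℤ)⟧')⟦(-1 : ℤ)⟧') ≫ (shiftEquiv T (1 : ℤ)).unitIso.inv.app X₀) ≫ biprod.inl ≫ g' = 0
      rw [Preadditive.neg_comp, neg_eq_zero]
      erw [Category.assoc]
      erw [← (shiftEquiv T (1 : ℤ)).unitIso.inv.naturality (biprod.inl ≫ g')]
      rw [show ((shiftEquiv T (1:ℤ)).functor ⋙ (shiftEquiv T (1:ℤ)).inverse).map
            (biprod.inl ≫ g') = ((biprod.inl ≫ g')⟦(1:ℤ)⟧')⟦(-1:ℤ)⟧' from rfl]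
      erw [← Category.assoc, ← Functor.map_comp, hP1, Functor.map_zero, zero_comp])
  change D ⟶ M at ρ₀
  change biprod.inl ≫ g' = a ≫ ρ₀ at hρ₀
  -- hρ₀ : biprod.inl ≫ g' = a ≫ ρ₀
  -- Step 8: correct ρ₀ to ρ
  have hβs : s ≫ (biprod.inr ≫ g' + δ ≫ ρ₀) = 0 := by
    rw [Preadditive.comp_add]
    have t1 : s ≫ (biprod.inr ≫ g') = -(i ≫ (biprod.inl ≫ g')) := by
      rw [e1, neg_neg]
    have t2 : s ≫ (δ ≫ ρ₀) = i ≫ (biprod.inl ≫ g') := by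
      rw [← Category.assoc, hsδ, Category.assoc, ← hρ₀]
    rw [t1, t2, neg_add_cancel]
  obtain ⟨ε, hε⟩ := Triangle.yoneda_exact₂ _ hT1 (biprod.inr ≫ g' + δ ≫ ρ₀) hβs
  change N₀ ⟶ M at ε
  change biprod.inr ≫ g' + δ ≫ ρ₀ = g ≫ ε at hε
  -- hε : biprod.inr ≫ g' + δ ≫ ρ₀ = g ≫ ε
  set ρ : D ⟶ M := ρ₀ - b ≫ ε with hρdef
  have haρ : a ≫ ρ = biprod.inl ≫ g' := by
    rw [hρdef, Preadditive.comp_sub, ← Category.assoc, hab, zero_comp, sub_zero, ← hρ₀]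
  have hδρ : δ ≫ ρ = -(biprod.inr ≫ g') := by
    rw [hρdef, Preadditive.comp_sub, ← Category.assoc δ b, hδb, ← hε]
    abel
  have hsplit : g' ≫ (𝟙 M - χ ≫ ρ) = 0 := by
    apply biprod.hom_ext'
    · rw [comp_zero, Preadditive.comp_sub, comp_id, ← Category.assoc g' χ ρ, ← hχ,
        Preadditive.comp_sub, ← Category.assoc, biprod.inl_desc, haρ, sub_self]
    · rw [comp_zero, Preadditive.comp_sub, comp_id, ← Category.assoc g' χ ρ, ← hχ,
        Preadditive.comp_sub, ← Category.assoc, biprod.inr_desc, Preadditive.neg_comp,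
        hδρ, neg_neg, sub_self]
  -- Step 9: the homotopy σ
  obtain ⟨σ, hσ⟩ := Triangle.yoneda_exact₃ _ hT3 (𝟙 M - χ ≫ ρ) hsplit
  change A⟦(1:ℤ)⟧ ⟶ M at σ
  change 𝟙 M - χ ≫ ρ = h' ≫ σ at hσ
  -- hσ : 𝟙 M - χ ≫ ρ = h' ≫ σ
  -- Step 10: χ ≫ ρ factors through X, and kills h'
  obtain ⟨Q₁, hQ₁X, c₀, d₀, hc₀d₀⟩ := key_lemma hN hLoc hM.1 hM.2 hDN χ ρ
  have hd₀h' : d₀ ≫ h' = 0 := by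
    obtain ⟨e₀, he₀⟩ := Triangle.coyoneda_exact₂ _
      (rot_of_distTriang _ (rot_of_distTriang _ hT2)) (d₀ ≫ h') (by
        change (d₀ ≫ h') ≫ (-(i⟦(1 : ℤ)⟧')) = 0
        rw [Preadditive.comp_neg, neg_eq_zero, Category.assoc, hh'i, comp_zero])
    change Q₁ ⟶ U₀ at e₀
    change d₀ ≫ h' = e₀ ≫ q at he₀
    -- he₀ : d₀ ≫ h' = e₀ ≫ q
    obtain ⟨k₁, hk₁⟩ := hpcov.2 Q₁ hQ₁X e₀
    rw [he₀, ← hk₁, Category.assoc, hpq, comp_zero]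
  have hχρh' : (χ ≫ ρ) ≫ h' = 0 := by
    rw [hc₀d₀, Category.assoc, hd₀h', comp_zero]
  have hkey1 : h' ≫ σ ≫ h' = h' := by
    have e := congrArg (fun φ => φ ≫ h') hσ
    change (𝟙 M - χ ≫ ρ) ≫ h' = (h' ≫ σ) ≫ h' at e
    rw [Preadditive.sub_comp, id_comp, hχρh', sub_zero, Category.assoc] at e
    exact e.symm
  -- Step 11: the splitting map rt : X₀ ⊞ B ⟶ A (up to shift)
  obtain ⟨ψ, hψ⟩ := Triangle.yoneda_exact₂ _
    (rot_of_distTriang _ (rot_of_distTriang _ hT3)) (𝟙 (A⟦(1 : ℤ)⟧) - σ ≫ h') (by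
      change h' ≫ (𝟙 (A⟦(1 : ℤ)⟧) - σ ≫ h') = 0
      rw [Preadditive.comp_sub, comp_id, hkey1, sub_self])
  change (X₀ ⊞ B)⟦(1:ℤ)⟧ ⟶ A⟦(1:ℤ)⟧ at ψ
  change 𝟙 (A⟦(1 : ℤ)⟧) - σ ≫ h' = (-((biprod.lift i s)⟦(1 : ℤ)⟧')) ≫ ψ at hψ
  -- hψ : 𝟙 A⟦1⟧ - σ ≫ h' = -(biprod.lift i s)⟦1⟧' ≫ ψ
  obtain ⟨rt, hrt⟩ : ∃ rt : X₀ ⊞ B ⟶ A, (shiftFunctor T (1 : ℤ)).map rt = -ψ :=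
    ⟨(shiftFunctor T (1 : ℤ)).preimage (-ψ), Functor.map_preimage _ _⟩
  have hmain : (shiftFunctor T (1 : ℤ)).map (𝟙 A - biprod.lift i s ≫ rt) = σ ≫ h' := by
    rw [Functor.map_sub, Functor.map_comp, CategoryTheory.Functor.map_id, hrt, Preadditive.comp_neg,
      sub_neg_eq_add]
    rw [Preadditive.neg_comp] at hψ
    rw [← neg_neg ((shiftFunctor T (1 : ℤ)).map (biprod.lift i s) ≫ ψ), ← hψ]
    abel
  -- the X-flavoured correction maps
  set c₁ : A ⟶ (N₀⟦(-1 : ℤ)⟧) :=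
    (shiftFunctorCompIsoId T (1 : ℤ) (-1 : ℤ) (add_neg_cancel (1:ℤ))).inv.app A ≫
      (σ ≫ m)⟦(-1 : ℤ)⟧' with hc₁def
  set d₁ : (N₀⟦(-1 : ℤ)⟧) ⟶ A :=
    h⟦(-1 : ℤ)⟧' ≫
      (shiftFunctorCompIsoId T (1 : ℤ) (-1 : ℤ) (add_neg_cancel (1:ℤ))).hom.app A
    with hd₁def
  have hconj : c₁ ≫ d₁ = 𝟙 A - biprod.lift i s ≫ rt := by
    have e2 : (σ ≫ m)⟦(-1 : ℤ)⟧' ≫ h⟦(-1 : ℤ)⟧' =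
        ((𝟙 A - biprod.lift i s ≫ rt)⟦(1 : ℤ)⟧')⟦(-1 : ℤ)⟧' := by
      rw [← Functor.map_comp, Category.assoc, hmh, hmain]
    rw [hc₁def, hd₁def, Category.assoc, ← Category.assoc ((σ ≫ m)⟦(-1 : ℤ)⟧'), e2,
      shift_shift_neg']
    simp
  have hsum : 𝟙 A - s ≫ (biprod.inr ≫ rt) = i ≫ (biprod.inl ≫ rt) + c₁ ≫ d₁ := by
    rw [hconj, hf_dec, Preadditive.add_comp, Category.assoc, Category.assoc]
    abel
  have hpart1 : FactorsThru X (𝟙 A - s ≫ (biprod.inr ≫ rt)) := by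
    have hEq : 𝟙 A - s ≫ (biprod.inr ≫ rt) =
        biprod.lift i c₁ ≫ biprod.desc (biprod.inl ≫ rt) d₁ := by
      rw [biprod.lift_desc, hsum]
    rw [hEq]
    exact key_lemma hN hLoc hA.1 hA.2
      (hN.biprod_mem hX₀N (hN.unshift _ hN₀)) _ _
  -- Step 13: part 2
  have hd₁s : d₁ ≫ s = 0 := by
    have e3 : (shiftFunctorCompIsoId T (1 : ℤ) (-1 : ℤ) (add_neg_cancel (1:ℤ))).hom.app A ≫ s =
        (s⟦(1 : ℤ)⟧')⟦(-1 : ℤ)⟧' ≫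
          (shiftFunctorCompIsoId T (1 : ℤ) (-1 : ℤ) (add_neg_cancel (1:ℤ))).hom.app B := by
      rw [shift_shift_neg']
      simp
    rw [hd₁def, Category.assoc, e3, ← Category.assoc, ← Functor.map_comp, hhs,
      Functor.map_zero, zero_comp]
  have hsw : s ≫ (𝟙 B - (biprod.inr ≫ rt) ≫ s) = i ≫ ((biprod.inl ≫ rt) ≫ s) := by
    have e4 : s ≫ (𝟙 B - (biprod.inr ≫ rt) ≫ s) =
        (𝟙 A - s ≫ (biprod.inr ≫ rt)) ≫ s := by
      simp only [Preadditive.comp_sub, Preadditive.sub_comp, comp_id, id_comp,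
        Category.assoc]
    rw [e4, hsum, Preadditive.add_comp, Category.assoc c₁ d₁ s, hd₁s, comp_zero,
      add_zero, Category.assoc]
  have hfφ₂ : biprod.lift i s ≫
      biprod.desc (-((biprod.inl ≫ rt) ≫ s)) (𝟙 B - (biprod.inr ≫ rt) ≫ s) = 0 := by
    rw [biprod.lift_desc, Preadditive.comp_neg, hsw, neg_add_cancel]
  obtain ⟨ψ₂, hψ₂⟩ := Triangle.yoneda_exact₂ _ hT3 _ hfφ₂
  change M ⟶ B at ψ₂
  change biprod.desc (-((biprod.inl ≫ rt) ≫ s)) (𝟙 B - (biprod.inr ≫ rt) ≫ s) = g' ≫ ψ₂ at hψ₂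
  -- hψ₂ : biprod.desc _ _ = g' ≫ ψ₂
  have hw1 : 𝟙 B - (biprod.inr ≫ rt) ≫ s = biprod.inr ≫ g' ≫ ψ₂ := by
    conv_lhs => rw [← biprod.inr_desc (-((biprod.inl ≫ rt) ≫ s))
      (𝟙 B - (biprod.inr ≫ rt) ≫ s)]
    rw [hψ₂]
  have hone : (𝟙 M : M ⟶ M) = χ ≫ ρ + h' ≫ σ := by
    rw [← hσ]; abel
  have hw2 : 𝟙 B - (biprod.inr ≫ rt) ≫ s = (biprod.inr ≫ g' ≫ χ) ≫ (ρ ≫ ψ₂) := by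
    rw [hw1]
    have e5 : g' ≫ ψ₂ = g' ≫ χ ≫ ρ ≫ ψ₂ := by
      conv_lhs => rw [← id_comp ψ₂, hone]
      simp only [Preadditive.add_comp, Preadditive.comp_add, Category.assoc]
      rw [reassoc_of% hg'h', zero_comp, add_zero]
    rw [e5]
    simp only [Category.assoc]
  have hpart2 : FactorsThru X (𝟙 B - (biprod.inr ≫ rt) ≫ s) := by
    rw [hw2]
    exact key_lemma hN hLoc hB.1 hB.2 hDN _ _
  exact ⟨biprod.inr ≫ rt, hpart1, hpart2⟩

end VerdierPaper
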